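/- arXiv:2111.03996 — 2 statements merged into one kernel-verified Lean document; each statement's English description precedes it below -/
import Mathlib

section
/- Let α > 0, η > 0, M > 0, c > 0, and let f : ℝ → ℝ be a smooth 2π-periodic function with ∫₀^{2π} f(θ)dθ = 0. Suppose u_p, v_p are smooth functions on ℝ×(−∞,0], 2π-periodic in θ, solving the steady Prandtl system (c + u_p)∂_θu_p + (v_p(θ,Y) − v_p(θ,0))∂_Y u_p − ∂_YY u_p = 0, ∂_θ u_p + ∂_Y v_p = 0, with boundary condition u_p(θ,0) = α + ηf(θ) − c, such that (u_p, v_p) → (0,0) uniformly as Y → −∞, c + u_p(θ,Y) > 0 for all (θ,Y), and sup|u_p| ≤ M. Then c² = α² + (η²/2π)∫₀^{2π} f(θ)²dθ. -/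
open MeasureTheory Real Filter Set
open scoped Interval

noncomputable section

/-- Partial derivative in the first variable. -/
def pd1 (f : ℝ → ℝ → ℝ) : ℝ → ℝ → ℝ := fun x y => deriv (fun t => f t y) x

/-- Partial derivative in the second variable. -/
def pd2 (f : ℝ → ℝ → ℝ) : ℝ → ℝ → ℝ := fun x y => deriv (fun t => f x t) y

/-- Smoothness of a function of two real variables. -/
def Smooth2 (f : ℝ → ℝ → ℝ) : Prop := ContDiff ℝ (⊤ : ℕ∞) (Function.uncurry f)

/-- `2π`-periodicity in the first variable. -/
def Periodic2 (f : ℝ → ℝ → ℝ) : Prop := ∀ x y, f (x + 2 * π) y = f x y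

set_option maxHeartbeats 1000000

lemma Smooth2.cont {f : ℝ → ℝ → ℝ} (hf : Smooth2 f) : Continuous (Function.uncurry f) :=
  hf.continuous

lemma Smooth2.hasDerivAt_pd1 {f : ℝ → ℝ → ℝ} (hf : Smooth2 f) (x y : ℝ) :
    HasDerivAt (fun t => f t y) (pd1 f x y) x := by
  have h : DifferentiableAt ℝ (fun t => f t y) x := by
    have : (fun t => f t y) = (Function.uncurry f) ∘ (fun t => (t, y)) := rfl
    rw [this]
    exact (hf.differentiable (by simp) (x, y)).comp x (by fun_prop)
  exact h.hasDerivAt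

lemma Smooth2.hasDerivAt_pd2 {f : ℝ → ℝ → ℝ} (hf : Smooth2 f) (x y : ℝ) :
    HasDerivAt (fun t => f x t) (pd2 f x y) y := by
  have h : DifferentiableAt ℝ (fun t => f x t) y := by
    have : (fun t => f x t) = (Function.uncurry f) ∘ (fun t => (x, t)) := rfl
    rw [this]
    exact (hf.differentiable (by simp) (x, y)).comp y (by fun_prop)
  exact h.hasDerivAt

/-- chain rule along a curve θ ↦ (θ, Y θ). -/
lemma Smooth2.hasDerivAt_curve {f : ℝ → ℝ → ℝ} (hf : Smooth2 f) {Y : ℝ → ℝ} {Y' θ : ℝ}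
    (hY : HasDerivAt Y Y' θ) :
    HasDerivAt (fun t => f t (Y t)) (pd1 f θ (Y θ) + Y' * pd2 f θ (Y θ)) θ := by
  have hcurve : HasDerivAt (fun t => (t, Y t)) ((1 : ℝ), Y') θ := (hasDerivAt_id θ).prodMk hY
  have hD := (hf.differentiable (by simp) (θ, Y θ)).hasFDerivAt
  have hcomp := hD.comp_hasDerivAt θ hcurve
  have h1 : pd1 f θ (Y θ) = fderiv ℝ (Function.uncurry f) (θ, Y θ) (1, 0) := by
    have hc : HasDerivAt (fun t => f t (Y θ)) (fderiv ℝ (Function.uncurry f) (θ, Y θ) (1, 0)) θ :=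
      by have := hD.comp_hasDerivAt θ ((hasDerivAt_id θ).prodMk (hasDerivAt_const θ (Y θ))); exact this
    exact hc.deriv ▸ rfl
  have h2 : pd2 f θ (Y θ) = fderiv ℝ (Function.uncurry f) (θ, Y θ) (0, 1) := by
    have hc : HasDerivAt (fun t => f θ t) (fderiv ℝ (Function.uncurry f) (θ, Y θ) (0, 1)) (Y θ) :=
      by have := hD.comp_hasDerivAt (Y θ) ((hasDerivAt_const (Y θ) θ).prodMk (hasDerivAt_id (Y θ))); exact this
    exact hc.deriv ▸ rfl
  have hdecomp : ((1 : ℝ), Y') = ((1:ℝ), (0:ℝ)) + Y' • ((0:ℝ), (1:ℝ)) := by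
    simp [Prod.ext_iff]
  refine hcomp.congr_deriv ?_
  rw [hdecomp, map_add, ContinuousLinearMap.map_smul, ← h1, ← h2]
  simp [smul_eq_mul]


lemma Smooth2.pd1_eq_fderiv {f : ℝ → ℝ → ℝ} (hf : Smooth2 f) (x y : ℝ) :
    pd1 f x y = fderiv ℝ (Function.uncurry f) (x, y) (1, 0) := by
  have hD := (hf.differentiable (by simp) (x, y)).hasFDerivAt
  have hc : HasDerivAt (fun t => f t y) (fderiv ℝ (Function.uncurry f) (x, y) (1, 0)) x :=
    by have := hD.comp_hasDerivAt x ((hasDerivAt_id x).prodMk (hasDerivAt_const x y)); exact this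
  exact hc.deriv

lemma Smooth2.pd2_eq_fderiv {f : ℝ → ℝ → ℝ} (hf : Smooth2 f) (x y : ℝ) :
    pd2 f x y = fderiv ℝ (Function.uncurry f) (x, y) (0, 1) := by
  have hD := (hf.differentiable (by simp) (x, y)).hasFDerivAt
  have hc : HasDerivAt (fun t => f x t) (fderiv ℝ (Function.uncurry f) (x, y) (0, 1)) y :=
    by have := hD.comp_hasDerivAt y ((hasDerivAt_const y x).prodMk (hasDerivAt_id y)); exact this
  exact hc.deriv

lemma Smooth2.fderiv_apply_smooth {f : ℝ → ℝ → ℝ} (hf : Smooth2 f) (v : ℝ × ℝ) :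
    ContDiff ℝ (⊤ : ℕ∞) (fun p : ℝ × ℝ => fderiv ℝ (Function.uncurry f) p v) := by
  have h1 : ContDiff ℝ (⊤ : ℕ∞) (fderiv ℝ (Function.uncurry f)) :=
    hf.fderiv_right (mod_cast le_top)
  exact h1.clm_apply contDiff_const

lemma Smooth2.pd1_smooth {f : ℝ → ℝ → ℝ} (hf : Smooth2 f) : Smooth2 (pd1 f) := by
  have : Function.uncurry (pd1 f) = fun p : ℝ × ℝ => fderiv ℝ (Function.uncurry f) p (1, 0) := by
    funext p
    exact hf.pd1_eq_fderiv p.1 p.2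
  rw [Smooth2, this]
  exact hf.fderiv_apply_smooth _

lemma Smooth2.pd2_smooth {f : ℝ → ℝ → ℝ} (hf : Smooth2 f) : Smooth2 (pd2 f) := by
  have : Function.uncurry (pd2 f) = fun p : ℝ × ℝ => fderiv ℝ (Function.uncurry f) p (0, 1) := by
    funext p
    exact hf.pd2_eq_fderiv p.1 p.2
  rw [Smooth2, this]
  exact hf.fderiv_apply_smooth _

lemma Periodic2.pd1 {f : ℝ → ℝ → ℝ} (hf : Periodic2 f) : Periodic2 (pd1 f) := by
  intro x y
  show deriv (fun t => f t y) (x + 2 * π) = _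
  rw [← deriv_comp_add_const (fun t => f t y) (2 * π)]
  congr 1
  funext t
  exact hf t y

lemma Periodic2.pd2 {f : ℝ → ℝ → ℝ} (hf : Periodic2 f) : Periodic2 (pd2 f) := by
  intro x y
  have : (fun t => f (x + 2 * π) t) = fun t => f x t := by
    funext t; exact hf x t
  show deriv (fun t => f (x + 2 * π) t) y = deriv (fun t => f x t) y
  rw [this]

/-- A continuous `2π`-periodic function of two variables is bounded on any horizontal strip. -/
lemma bound_of_periodic2 {f : ℝ → ℝ → ℝ} (hf : Continuous (Function.uncurry f))
    (hper : Periodic2 f) (a b : ℝ) :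
    ∃ C : ℝ, 0 ≤ C ∧ ∀ θ Y, Y ∈ Icc a b → |f θ Y| ≤ C := by
  obtain ⟨C, hC⟩ := (isCompact_Icc (a := ((0:ℝ),a)) (b := (2*π, b))).exists_bound_of_continuousOn
      hf.continuousOn
  refine ⟨max C 0, le_max_right _ _, fun θ Y hY => ?_⟩
  have hperθ : Function.Periodic (fun t => f t Y) (2 * π) := fun t => hper t Y
  obtain ⟨θ', hθ', hfeq⟩ := hperθ.exists_mem_Ico₀ Real.two_pi_pos θ
  have : ‖Function.uncurry f (θ', Y)‖ ≤ C := by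
    apply hC
    rw [Icc_prod_eq]
    constructor
    · exact ⟨hθ'.1, hθ'.2.le⟩
    · exact hY
  calc |f θ Y| = ‖f θ' Y‖ := by rw [hfeq]; rfl
  _ ≤ C := this
  _ ≤ max C 0 := le_max_left _ _

/-- **Batchelor–Wood formula.** If the steady Prandtl system on the half-strip
`ℝ × (-∞,0]` with boundary data `α + η f(θ) - c` has a smooth `2π`-periodic solution
`(u_p, v_p)` tending uniformly to `(0,0)` as `Y → -∞`, with `c + u_p > 0` and `u_p`
bounded by `M`, then `c² = α² + (η²/2π) ∫₀^{2π} f(θ)² dθ`. -/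
theorem batchelor_wood_formula (α η M c : ℝ) (hα : 0 < α) (hη : 0 < η) (hM : 0 < M)
    (hc : 0 < c) (f : ℝ → ℝ) (hfs : ContDiff ℝ (⊤ : ℕ∞) f)
    (hfper : ∀ θ, f (θ + 2 * π) = f θ)
    (hfmean : (∫ θ in (0:ℝ)..(2 * π), f θ) = 0)
    (up vp : ℝ → ℝ → ℝ)
    (hups : Smooth2 up) (hvps : Smooth2 vp)
    (hupper : Periodic2 up) (hvpper : Periodic2 vp)
    (heq1 : ∀ θ : ℝ, ∀ Y ≤ (0:ℝ),
      (c + up θ Y) * pd1 up θ Y + (vp θ Y - vp θ 0) * pd2 up θ Y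
        - pd2 (pd2 up) θ Y = 0)
    (heq2 : ∀ θ : ℝ, ∀ Y ≤ (0:ℝ), pd1 up θ Y + pd2 vp θ Y = 0)
    (hbc : ∀ θ : ℝ, up θ 0 = α + η * f θ - c)
    (hlim : ∀ δ > (0:ℝ), ∃ Y₀ : ℝ, ∀ θ : ℝ, ∀ Y ≤ Y₀,
      |up θ Y| < δ ∧ |vp θ Y| < δ)
    (hpos : ∀ θ : ℝ, ∀ Y ≤ (0:ℝ), 0 < c + up θ Y)
    (hbd : ∀ θ : ℝ, ∀ Y ≤ (0:ℝ), |up θ Y| ≤ M) :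
    c ^ 2 = α ^ 2 + η ^ 2 / (2 * π) * ∫ θ in (0:ℝ)..(2 * π), (f θ) ^ 2 := by
  have hupc : Continuous (Function.uncurry up) := hups.cont
  have hvpc : Continuous (Function.uncurry vp) := hvps.cont
  have hupcR : ∀ θ, Continuous (fun t => up θ t) :=
    fun θ => hupc.comp (continuous_const.prodMk continuous_id)
  -- ### lower bound `m` for `c + up`
  obtain ⟨Y₀', hY₀'⟩ := hlim (c/2) (by positivity)
  set Y₁ : ℝ := min Y₀' 0 with hY₁def
  have hY₁0 : Y₁ ≤ 0 := min_le_right _ _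
  have hKne : (Icc ((0:ℝ),Y₁) (2*π,(0:ℝ))).Nonempty := by
    rw [nonempty_Icc]
    exact ⟨by positivity, hY₁0⟩
  obtain ⟨z, hz, hzmin⟩ := (isCompact_Icc (a := ((0:ℝ),Y₁)) (b := (2*π, 0))).exists_isMinOn
      hKne hupc.continuousOn
  have hz2 : z.2 ≤ 0 := hz.2.2
  set m : ℝ := min (c/2) (c + up z.1 z.2) with hmdef
  have hm : 0 < m := lt_min (by positivity) (hpos z.1 z.2 hz2)
  have hmW : ∀ θ Y, Y ≤ 0 → m ≤ c + up θ Y := by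
    intro θ Y hY
    rcases le_or_gt Y Y₁ with hY' | hY'
    · have h1 := (hY₀' θ Y (hY'.trans (min_le_left _ _))).1
      have h2 := abs_lt.mp h1
      calc m ≤ c/2 := min_le_left _ _
      _ ≤ c + up θ Y := by linarith [h2.1]
    · have hperθ : Function.Periodic (fun t => up t Y) (2 * π) := fun t => hupper t Y
      obtain ⟨θ', hθ', hfeq⟩ := hperθ.exists_mem_Ico₀ Real.two_pi_pos θ
      have hmem : (θ', Y) ∈ Icc ((0:ℝ),Y₁) (2*π,(0:ℝ)) :=
        ⟨⟨hθ'.1, hY'.le⟩, ⟨hθ'.2.le, hY⟩⟩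
      have := hzmin hmem
      calc m ≤ c + up z.1 z.2 := min_le_right _ _
      _ ≤ c + Function.uncurry up (θ', Y) := by
          show c + up z.1 z.2 ≤ c + up θ' Y
          linarith [show up z.1 z.2 ≤ up θ' Y from this]
      _ = c + up θ Y := by rw [Function.uncurry]; rw [← hfeq]
  have hWub : ∀ θ Y, Y ≤ 0 → c + up θ Y ≤ c + M := by
    intro θ Y hY
    have := (abs_le.mp (hbd θ Y hY)).2
    linarith
  have hmM : m ≤ c + M := le_trans (hmW 0 0 le_rfl) (hWub 0 0 le_rfl)
  have hcM : 0 < c + M := by linarith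
  -- ### the stream function ψ
  set ψ : ℝ → ℝ → ℝ := fun θ Y => ∫ t in (0:ℝ)..Y, (c + up θ t) with hψdef
  have hψcontY : ∀ θ, Continuous (fun t => c + up θ t) :=
    fun θ => continuous_const.add (hupcR θ)
  have hψint : ∀ θ (a b : ℝ), IntervalIntegrable (fun t => c + up θ t) volume a b :=
    fun θ a b => (hψcontY θ).intervalIntegrable a b
  have hψ0 : ∀ θ, ψ θ 0 = 0 := fun θ => intervalIntegral.integral_same
  have hψY : ∀ θ Y, HasDerivAt (ψ θ) (c + up θ Y) Y :=
    fun θ Y => ((hψcontY θ).integral_hasStrictDerivAt 0 Y).hasDerivAt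
  have hψcont : ∀ θ, Continuous (ψ θ) := by
    intro θ
    rw [continuous_iff_continuousAt]
    exact fun Y => (hψY θ Y).continuousAt
  have hψsub : ∀ θ Y Y', ψ θ Y - ψ θ Y' = ∫ t in Y'..Y, (c + up θ t) :=
    fun θ Y Y' => intervalIntegral.integral_interval_sub_left (hψint θ 0 Y) (hψint θ 0 Y')
  have hψlb : ∀ θ Y' Y, Y' ≤ Y → Y ≤ 0 → m * (Y - Y') ≤ ψ θ Y - ψ θ Y' := by
    intro θ Y' Y hYY hY0
    rw [hψsub]
    have h1 : (∫ t in Y'..Y, m) ≤ ∫ t in Y'..Y, (c + up θ t) := by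
      apply intervalIntegral.integral_mono_on hYY (intervalIntegrable_const) (hψint θ _ _)
      intro t ht
      exact hmW θ t (ht.2.trans hY0)
    simpa [mul_comm] using h1
  have hψub : ∀ θ Y' Y, Y' ≤ Y → Y ≤ 0 → ψ θ Y - ψ θ Y' ≤ (c + M) * (Y - Y') := by
    intro θ Y' Y hYY hY0
    rw [hψsub]
    have h1 : (∫ t in Y'..Y, (c + up θ t)) ≤ ∫ t in Y'..Y, (c + M) := by
      apply intervalIntegral.integral_mono_on hYY (hψint θ _ _) (intervalIntegrable_const)
      intro t ht
      exact hWub θ t (ht.2.trans hY0)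
    calc (∫ t in Y'..Y, (c + up θ t)) ≤ ∫ t in Y'..Y, (c + M) := h1
    _ = (c + M) * (Y - Y') := by rw [intervalIntegral.integral_const, smul_eq_mul]; ring
  have hψle : ∀ θ Y, Y ≤ 0 → ψ θ Y ≤ m * Y := by
    intro θ Y hY
    have := hψlb θ Y 0 hY le_rfl
    rw [hψ0] at this
    linarith
  have hψge : ∀ θ Y, Y ≤ 0 → (c + M) * Y ≤ ψ θ Y := by
    intro θ Y hY
    have := hψub θ Y 0 hY le_rfl
    rw [hψ0] at this
    linarith
  have hbilip : ∀ θ Y Y', Y ≤ 0 → Y' ≤ 0 → m * |Y - Y'| ≤ |ψ θ Y - ψ θ Y'| := by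
    intro θ Y Y' hY hY'
    rcases le_total Y' Y with h | h
    · rw [abs_of_nonneg (by linarith), abs_of_nonneg (by nlinarith [hψlb θ Y' Y h hY])]
      exact hψlb θ Y' Y h hY
    · rw [abs_of_nonpos (by linarith), abs_of_nonpos (by nlinarith [hψlb θ Y Y' h hY'])]
      have := hψlb θ Y Y' h hY'
      linarith
  have hinj : ∀ θ Y Y', Y ≤ 0 → Y' ≤ 0 → ψ θ Y = ψ θ Y' → Y = Y' := by
    intro θ Y Y' hY hY' heq
    have := hbilip θ Y Y' hY hY'
    rw [heq, sub_self, abs_zero] at this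
    have h2 : |Y - Y'| ≤ 0 := by nlinarith [abs_nonneg (Y - Y')]
    have := abs_nonpos_iff.mp h2
    linarith [sub_eq_zero.mp this]
  have hψper : ∀ θ Y, ψ (θ + 2*π) Y = ψ θ Y := by
    intro θ Y
    simp only [hψdef]
    congr 1
    funext t
    rw [hupper]
  -- ### ∂θ ψ = vp θ 0 - vp θ Y  (for Y ≤ 0)
  have hpd1c : Continuous (Function.uncurry (pd1 up)) := hups.pd1_smooth.cont
  have hψθ : ∀ Y, Y ≤ 0 → ∀ θ₀ : ℝ, HasDerivAt (fun θ => ψ θ Y) (vp θ₀ 0 - vp θ₀ Y) θ₀ := by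
    intro Y hY θ₀
    obtain ⟨C1, hC1pos, hC1⟩ := bound_of_periodic2 hpd1c hupper.pd1 Y 0
    have hIsub : Ι (0:ℝ) Y ⊆ Icc Y 0 := by
      rw [uIoc_of_ge hY]
      exact Ioc_subset_Icc_self
    have key := (intervalIntegral.hasDerivAt_integral_of_dominated_loc_of_deriv_le
      (F := fun x t => c + up x t) (F' := fun x t => pd1 up x t) (x₀ := θ₀)
      (bound := fun _ => C1) (a := 0) (b := Y) (μ := volume) (Metric.ball_mem_nhds θ₀ one_pos)
      (Filter.Eventually.of_forall (fun x => ((hψcontY x).aestronglyMeasurable)))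
      (hψint θ₀ 0 Y)
      ((hpd1c.comp (continuous_const.prodMk continuous_id)).aestronglyMeasurable)
      (Filter.Eventually.of_forall (fun t ht x _ => by
        rw [Real.norm_eq_abs]
        exact hC1 x t (hIsub ht)))
      (intervalIntegrable_const)
      (Filter.Eventually.of_forall (fun t _ x _ => (hups.hasDerivAt_pd1 x t).const_add c))).2
    have hval : (∫ t in (0:ℝ)..Y, pd1 up θ₀ t) = vp θ₀ 0 - vp θ₀ Y := by
      have hcongr : EqOn (fun t => pd1 up θ₀ t) (fun t => -(pd2 vp θ₀ t)) (uIcc 0 Y) := by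
        intro t ht
        rw [uIcc_of_ge hY] at ht
        have := heq2 θ₀ t ht.2
        simp only
        linarith
      rw [intervalIntegral.integral_congr hcongr, intervalIntegral.integral_neg]
      have hftc : (∫ t in (0:ℝ)..Y, pd2 vp θ₀ t) = vp θ₀ Y - vp θ₀ 0 :=
        intervalIntegral.integral_eq_sub_of_hasDerivAt
          (fun t _ => hvps.hasDerivAt_pd2 θ₀ t)
          (((hvps.pd2_smooth.cont).comp
            (continuous_const.prodMk continuous_id)).intervalIntegrable 0 Y)
      rw [hftc]
      ring
    rw [hval] at key
    exact key
  -- ### the inverse `Z` of `ψ` in the second variable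
  have hZex : ∀ θ s : ℝ, ∃ Y, s ≤ 0 → (Y ≤ 0 ∧ ψ θ Y = s) := by
    intro θ s
    rcases le_or_gt s 0 with hs | hs
    · have hsm : s/m ≤ 0 := div_nonpos_of_nonpos_of_nonneg hs hm.le
      have hmem : s ∈ Icc (ψ θ (s/m)) (ψ θ 0) := by
        constructor
        · calc ψ θ (s/m) ≤ m * (s/m) := hψle θ _ hsm
          _ = s := by field_simp
        · rw [hψ0]; exact hs
      obtain ⟨Y, hY, hYs⟩ := intermediate_value_Icc hsm (hψcont θ).continuousOn hmem
      exact ⟨Y, fun _ => ⟨hY.2, hYs⟩⟩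
    · exact ⟨0, fun h => absurd hs (not_lt.mpr h)⟩
  choose Z hZ using hZex
  have hZle : ∀ θ s, s ≤ 0 → Z θ s ≤ 0 := fun θ s hs => (hZ θ s hs).1
  have hZψ : ∀ θ s, s ≤ 0 → ψ θ (Z θ s) = s := fun θ s hs => (hZ θ s hs).2
  have hZub : ∀ θ s, s ≤ 0 → Z θ s ≤ s / (c + M) := by
    intro θ s hs
    have h1 := hψge θ _ (hZle θ s hs)
    rw [hZψ θ s hs] at h1
    rw [le_div_iff₀ hcM, mul_comm]
    exact h1
  have hZlb : ∀ θ s, s ≤ 0 → s / m ≤ Z θ s := by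
    intro θ s hs
    have h1 := hψle θ _ (hZle θ s hs)
    rw [hZψ θ s hs] at h1
    rw [div_le_iff₀ hm, mul_comm]
    exact h1
  have hZ0 : ∀ θ, Z θ 0 = 0 := by
    intro θ
    apply hinj θ _ _ (hZle θ 0 le_rfl) le_rfl
    rw [hZψ θ 0 le_rfl, hψ0]
  have hZper : ∀ θ s, s ≤ 0 → Z (θ + 2*π) s = Z θ s := by
    intro θ s hs
    apply hinj θ _ _ (hZle _ s hs) (hZle θ s hs)
    rw [← hψper θ (Z (θ + 2*π) s), hZψ _ s hs, hZψ θ s hs]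
  have hZlips : ∀ θ s s', s ≤ 0 → s' ≤ 0 → |Z θ s - Z θ s'| ≤ |s - s'| / m := by
    intro θ s s' hs hs'
    have h1 := hbilip θ (Z θ s) (Z θ s') (hZle θ s hs) (hZle θ s' hs')
    rw [hZψ θ s hs, hZψ θ s' hs'] at h1
    rw [le_div_iff₀ hm, mul_comm]
    exact h1
  -- derivative of Z in s
  have hZs : ∀ θ s, s < 0 → HasDerivAt (fun s => Z θ s) ((c + up θ (Z θ s))⁻¹) s := by
    intro θ s hs
    have hWpos : 0 < c + up θ (Z θ s) := lt_of_lt_of_le hm (hmW θ _ (hZle θ s hs.le))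
    apply HasDerivAt.of_local_left_inverse
      (f := ψ θ) (g := fun s => Z θ s) (a := s)
    · -- continuity of Z θ at s
      apply continuousAt_of_locally_lipschitz (show (0:ℝ) < -s by linarith) (1/m)
      intro y hy
      have hy0 : y ≤ 0 := by
        rw [Real.dist_eq] at hy
        have := abs_lt.mp hy
        linarith [this.2]
      rw [Real.dist_eq, Real.dist_eq]
      calc |Z θ y - Z θ s| ≤ |y - s| / m := hZlips θ y s hy0 hs.le
      _ = 1/m * |y - s| := by ring
    · exact hψY θ (Z θ s)
    · exact ne_of_gt hWpos
    · filter_upwards [Iio_mem_nhds hs] with y hy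
      exact hZψ θ y (le_of_lt hy)
  -- ### derivative of Z in θ
  have hZθ : ∀ s, s < 0 → ∀ θ₀ : ℝ,
      HasDerivAt (fun θ => Z θ s)
        ((vp θ₀ (Z θ₀ s) - vp θ₀ 0) / (c + up θ₀ (Z θ₀ s))) θ₀ := by
    intro s hs θ₀
    have hY₀le : Z θ₀ s ≤ 0 := hZle θ₀ s hs.le
    set Y₀ := Z θ₀ s with hY₀def
    set w₀ := c + up θ₀ Y₀ with hw₀def
    have hw₀pos : 0 < w₀ := lt_of_lt_of_le hm (hmW θ₀ _ hY₀le)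
    obtain ⟨Cv, hCvpos, hCv⟩ := bound_of_periodic2 hvpc hvpper (s/m) 0
    have hsm0 : s/m ≤ 0 := div_nonpos_of_nonpos_of_nonneg hs.le hm.le
    set L := 2*Cv + 1 with hLdef
    have hL : 0 < L := by linarith
    have hψlip : ∀ Y ∈ Icc (s/m) (0:ℝ), ∀ θ θ' : ℝ, |ψ θ Y - ψ θ' Y| ≤ L * |θ - θ'| := by
      intro Y hY θ θ'
      have h := Convex.norm_image_sub_le_of_norm_hasDerivWithin_le
        (f := fun θ => ψ θ Y) (f' := fun θ => vp θ 0 - vp θ Y) (C := L) (s := univ)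
        (fun x _ => (hψθ Y hY.2 x).hasDerivWithinAt)
        (fun x _ => by
          rw [Real.norm_eq_abs]
          calc |vp x 0 - vp x Y| ≤ |vp x 0| + |vp x Y| := abs_sub _ _
          _ ≤ Cv + Cv := add_le_add (hCv x 0 ⟨hsm0, le_rfl⟩) (hCv x Y hY)
          _ ≤ L := by linarith)
        convex_univ (mem_univ θ') (mem_univ θ)
      simpa [Real.norm_eq_abs] using h
    set K := L / m with hKdef
    have hK : 0 < K := div_pos hL hm
    have hZmem : ∀ θ, Z θ s ∈ Icc (s/m) (0:ℝ) := fun θ => ⟨hZlb θ s hs.le, hZle θ s hs.le⟩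
    have hY₀mem : Y₀ ∈ Icc (s/m) (0:ℝ) := hZmem θ₀
    have hZlipθ : ∀ θ, |Z θ s - Y₀| ≤ K * |θ - θ₀| := by
      intro θ
      have h1 := hbilip θ (Z θ s) Y₀ (hZle θ s hs.le) hY₀le
      rw [hZψ θ s hs.le] at h1
      have h2 : ψ θ₀ Y₀ = s := hZψ θ₀ s hs.le
      have h3 : |s - ψ θ Y₀| ≤ L * |θ - θ₀| := by
        rw [← h2, abs_sub_comm θ θ₀]
        calc |ψ θ₀ Y₀ - ψ θ Y₀| ≤ L * |θ₀ - θ| := hψlip Y₀ hY₀mem θ₀ θ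
        _ = L * |θ₀ - θ| := rfl
      rw [hKdef, div_mul_eq_mul_div, le_div_iff₀ hm, mul_comm]
      exact h1.trans h3
    rw [hasDerivAt_iff_isLittleO]
    have hgoal : (fun θ => Z θ s - Z θ₀ s - (θ - θ₀) • ((vp θ₀ Y₀ - vp θ₀ 0) / w₀)) =
        fun θ => -w₀⁻¹ * ((ψ θ (Z θ s) - ψ θ Y₀ - w₀ * (Z θ s - Y₀))
          + (ψ θ Y₀ - ψ θ₀ Y₀ - (θ - θ₀) * (vp θ₀ 0 - vp θ₀ Y₀))) := by
      funext θ
      have h1 : ψ θ (Z θ s) = s := hZψ θ s hs.le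
      have h2 : ψ θ₀ Y₀ = s := hZψ θ₀ s hs.le
      rw [← hY₀def, h1, h2, smul_eq_mul]
      field_simp
      ring
    rw [hgoal]
    apply Asymptotics.IsLittleO.const_mul_left
    apply Asymptotics.IsLittleO.add
    · -- the nonlinear term
      rw [Asymptotics.isLittleO_iff]
      intro ε hε
      set ε' := ε / (K + 1) with hε'def
      have hε' : 0 < ε' := by positivity
      have hcontA := hupc.continuousAt (x := (θ₀, Y₀))
      rw [Metric.continuousAt_iff] at hcontA
      obtain ⟨ρ, hρ, hball⟩ := hcontA ε' hε'
      filter_upwards [eventually_abs_sub_lt θ₀ (show (0:ℝ) < ρ / (K + 1) by positivity)]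
        with θ hθ
      have hAeq : ψ θ (Z θ s) - ψ θ Y₀ - w₀ * (Z θ s - Y₀)
          = ∫ t in Y₀..(Z θ s), (up θ t - up θ₀ Y₀) := by
        rw [hψsub θ (Z θ s) Y₀]
        have h2 : (∫ t in Y₀..(Z θ s), (up θ t - up θ₀ Y₀))
            = (∫ t in Y₀..(Z θ s), (c + up θ t))
              - ∫ t in Y₀..(Z θ s), (c + up θ₀ Y₀ : ℝ) := by
          rw [← intervalIntegral.integral_sub (hψint θ _ _) intervalIntegrable_const]
          congr 1
          funext t
          ring
        rw [h2, intervalIntegral.integral_const, smul_eq_mul, hw₀def]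
        ring
      rw [hAeq]
      have hbound : ∀ t ∈ Ι Y₀ (Z θ s), ‖up θ t - up θ₀ Y₀‖ ≤ ε' := by
        intro t ht
        have htY : |t - Y₀| ≤ |Z θ s - Y₀| := by
          rw [uIoc_eq_union] at ht
          rcases ht with ht | ht
          · rw [abs_of_pos (by linarith [ht.1]), abs_of_nonneg (by linarith [ht.1, ht.2])]
            linarith [ht.2]
          · rw [abs_of_nonpos (by linarith [ht.2]), abs_of_nonpos (by linarith [ht.1, ht.2])]
            linarith [ht.1]
        have hdist : dist (θ, t) (θ₀, Y₀) < ρ := by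
          rw [Prod.dist_eq]
          apply max_lt
          · rw [Real.dist_eq]
            calc |θ - θ₀| < ρ / (K + 1) := hθ
            _ ≤ ρ := by
                rw [div_le_iff₀ (by positivity)]
                nlinarith
          · rw [Real.dist_eq]
            calc |t - Y₀| ≤ |Z θ s - Y₀| := htY
            _ ≤ K * |θ - θ₀| := hZlipθ θ
            _ < K * (ρ / (K + 1)) := by
                apply mul_lt_mul_of_pos_left hθ hK
            _ ≤ ρ := by
                have h7 : (0:ℝ) < K + 1 := by linarith
                rw [← mul_div_assoc, div_le_iff₀ h7]
                nlinarith
        have h5 := hball hdist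
        rw [Real.dist_eq] at h5
        exact le_of_lt h5
      calc ‖∫ t in Y₀..(Z θ s), (up θ t - up θ₀ Y₀)‖
          ≤ ε' * |Z θ s - Y₀| := intervalIntegral.norm_integral_le_of_norm_le_const hbound
      _ ≤ ε' * (K * |θ - θ₀|) := by
          apply mul_le_mul_of_nonneg_left (hZlipθ θ) hε'.le
      _ ≤ ε * ‖θ - θ₀‖ := by
          rw [Real.norm_eq_abs]
          have h6 : ε' * (K + 1) = ε := by
            rw [hε'def]
            field_simp
          nlinarith [abs_nonneg (θ - θ₀)]
    · have hB := hψθ Y₀ hY₀le θ₀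
      rw [hasDerivAt_iff_isLittleO] at hB
      simpa [smul_eq_mul] using hB
  -- ### derivative along the streamline
  have hWSpos : ∀ θ s, s ≤ 0 → 0 < c + up θ (Z θ s) :=
    fun θ s hs => lt_of_lt_of_le hm (hmW θ _ (hZle θ s hs))
  have hHθ : ∀ s, s < 0 → ∀ θ : ℝ, HasDerivAt (fun θ => up θ (Z θ s))
      (pd2 (pd2 up) θ (Z θ s) / (c + up θ (Z θ s))) θ := by
    intro s hs θ
    have h1 := hups.hasDerivAt_curve (hZθ s hs θ)
    convert h1 using 1
    have hW := hWSpos θ s hs.le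
    have hpde := heq1 θ (Z θ s) (hZle θ s hs.le)
    have h2 : pd2 (pd2 up) θ (Z θ s) = (c + up θ (Z θ s)) * pd1 up θ (Z θ s)
        + (vp θ (Z θ s) - vp θ 0) * pd2 up θ (Z θ s) := by linarith
    rw [h2]
    field_simp
  have hZcontθ : ∀ s, s < 0 → Continuous (fun θ => Z θ s) := by
    intro s hs
    rw [continuous_iff_continuousAt]
    exact fun θ => (hZθ s hs θ).continuousAt
  have hI : ∀ s, s < 0 →
      (∫ θ in (0:ℝ)..(2*π), pd2 (pd2 up) θ (Z θ s) / (c + up θ (Z θ s))) = 0 := by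
    intro s hs
    have hcont : Continuous (fun θ => pd2 (pd2 up) θ (Z θ s) / (c + up θ (Z θ s))) := by
      apply Continuous.div
      · exact (hups.pd2_smooth.pd2_smooth.cont).comp (continuous_id.prodMk (hZcontθ s hs))
      · exact continuous_const.add (hupc.comp (continuous_id.prodMk (hZcontθ s hs)))
      · exact fun θ => ne_of_gt (hWSpos θ s hs.le)
    have hftc := intervalIntegral.integral_eq_sub_of_hasDerivAt
      (f := fun θ => up θ (Z θ s)) (fun θ _ => hHθ s hs θ)
      (hcont.intervalIntegrable 0 (2*π))
    rw [hftc]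
    have h1 : Z (2*π) s = Z 0 s := by
      have := hZper 0 s hs.le
      simpa using this
    have h2 : up (2*π) (Z 0 s) = up 0 (Z 0 s) := by
      have := hupper 0 (Z 0 s)
      simpa using this
    show up (2*π) (Z (2*π) s) - up 0 (Z 0 s) = 0
    rw [h1, h2, sub_self]
  -- ### the functions h and msl and their derivatives
  set hfun : ℝ → ℝ := fun s => ∫ θ in (0:ℝ)..(2*π), (c + up θ (Z θ s))^2 with hhdef
  set msl : ℝ → ℝ := fun s => ∫ θ in (0:ℝ)..(2*π), 2 * pd2 up θ (Z θ s) with hmsldef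
  have hZball : ∀ s, s < 0 → ∀ x ∈ Metric.ball s (-s/2), x < 0 ∧ 3*s/2 ≤ x := by
    intro s hs x hx
    rw [Metric.mem_ball, Real.dist_eq] at hx
    have := abs_lt.mp hx
    constructor <;> linarith [this.1, this.2]
  have hZstrip : ∀ s, s < 0 → ∀ x, x < 0 → 3*s/2 ≤ x → ∀ θ,
      Z θ x ∈ Icc (3*s/(2*m)) (0:ℝ) := by
    intro s hs x hx h32 θ
    refine ⟨le_trans ?_ (hZlb θ x hx.le), hZle θ x hx.le⟩
    have heq : 3*s/(2*m) = (3*s/2)/m := by ring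
    rw [heq]
    gcongr
  have hh' : ∀ s, s < 0 → HasDerivAt hfun (msl s) s := by
    intro s hs
    obtain ⟨C2, hC2pos, hC2⟩ := bound_of_periodic2 (hups.pd2_smooth.cont) hupper.pd2
      (3*s/(2*m)) 0
    have hεpos : 0 < -s/2 := by linarith
    have key := (intervalIntegral.hasDerivAt_integral_of_dominated_loc_of_deriv_le
      (F := fun x θ => (c + up θ (Z θ x))^2) (F' := fun x θ => 2 * pd2 up θ (Z θ x))
      (x₀ := s) (bound := fun _ => 2*C2) (a := 0) (b := 2*π) (μ := volume) (Metric.ball_mem_nhds s hεpos)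
      ?_ ?_ ?_ ?_ intervalIntegrable_const ?_).2
    · exact key
    · filter_upwards [Iio_mem_nhds hs] with x hx
      exact (((continuous_const.add
        (hupc.comp (continuous_id.prodMk (hZcontθ x hx)))).pow 2)).aestronglyMeasurable
    · exact (((continuous_const.add
        (hupc.comp (continuous_id.prodMk (hZcontθ s hs)))).pow 2)).intervalIntegrable 0 (2*π)
    · exact (continuous_const.mul ((hups.pd2_smooth.cont).comp
        (continuous_id.prodMk (hZcontθ s hs)))).aestronglyMeasurable
    · apply Filter.Eventually.of_forall
      intro θ _ x hx
      obtain ⟨hx0, h32⟩ := hZball s hs x hx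
      have hmem := hZstrip s hs x hx0 h32 θ
      rw [Real.norm_eq_abs, abs_mul, abs_two]
      have := hC2 θ (Z θ x) hmem
      show 2 * |pd2 up θ (Z θ x)| ≤ 2 * C2
      linarith
    · apply Filter.Eventually.of_forall
      intro θ _ x hx
      obtain ⟨hx0, h32⟩ := hZball s hs x hx
      have hW : 0 < c + up θ (Z θ x) := hWSpos θ x hx0.le
      have hZx := hZs θ x hx0
      have hcomp := (hups.hasDerivAt_pd2 θ (Z θ x)).comp x hZx
      have hsq := ((hcomp.const_add c).pow 2)
      have hW' := ne_of_gt hW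
      refine hsq.congr_deriv ?_
      simp only [Function.comp_apply, Nat.cast_ofNat, Nat.add_one_sub_one, pow_one]
      field_simp
  have hmsl' : ∀ s, s < 0 → HasDerivAt msl 0 s := by
    intro s hs
    obtain ⟨C3, hC3pos, hC3⟩ := bound_of_periodic2 (hups.pd2_smooth.pd2_smooth.cont)
      hupper.pd2.pd2 (3*s/(2*m)) 0
    have hεpos : 0 < -s/2 := by linarith
    have key := (intervalIntegral.hasDerivAt_integral_of_dominated_loc_of_deriv_le
      (F := fun x θ => 2 * pd2 up θ (Z θ x))
      (F' := fun x θ => 2 * (pd2 (pd2 up) θ (Z θ x) / (c + up θ (Z θ x))))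
      (x₀ := s) (bound := fun _ => 2*C3/m) (a := 0) (b := 2*π) (μ := volume) (Metric.ball_mem_nhds s hεpos)
      ?_ ?_ ?_ ?_ intervalIntegrable_const ?_).2
    · have hval : (∫ θ in (0:ℝ)..(2*π),
          2 * (pd2 (pd2 up) θ (Z θ s) / (c + up θ (Z θ s)))) = 0 := by
        rw [intervalIntegral.integral_const_mul, hI s hs, mul_zero]
      rw [hval] at key
      exact key
    · filter_upwards [Iio_mem_nhds hs] with x hx
      exact (continuous_const.mul ((hups.pd2_smooth.cont).comp
        (continuous_id.prodMk (hZcontθ x hx)))).aestronglyMeasurable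
    · exact (continuous_const.mul ((hups.pd2_smooth.cont).comp
        (continuous_id.prodMk (hZcontθ s hs)))).intervalIntegrable 0 (2*π)
    · apply Continuous.aestronglyMeasurable
      apply continuous_const.mul
      apply Continuous.div
      · exact (hups.pd2_smooth.pd2_smooth.cont).comp (continuous_id.prodMk (hZcontθ s hs))
      · exact continuous_const.add (hupc.comp (continuous_id.prodMk (hZcontθ s hs)))
      · exact fun θ => ne_of_gt (hWSpos θ s hs.le)
    · apply Filter.Eventually.of_forall
      intro θ _ x hx
      obtain ⟨hx0, h32⟩ := hZball s hs x hx
      have hmem := hZstrip s hs x hx0 h32 θ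
      have hW : 0 < c + up θ (Z θ x) := hWSpos θ x hx0.le
      have hWm : m ≤ c + up θ (Z θ x) := hmW θ _ (hZle θ x hx0.le)
      rw [Real.norm_eq_abs, abs_mul, abs_two, abs_div, abs_of_pos hW]
      have h6 : |pd2 (pd2 up) θ (Z θ x)| / (c + up θ (Z θ x)) ≤ C3 / m :=
        div_le_div₀ hC3pos (hC3 θ (Z θ x) hmem) hm hWm
      calc 2 * (|pd2 (pd2 up) θ (Z θ x)| / (c + up θ (Z θ x))) ≤ 2 * (C3/m) := by linarith
      _ = 2*C3/m := by ring
    · apply Filter.Eventually.of_forall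
      intro θ _ x hx
      obtain ⟨hx0, h32⟩ := hZball s hs x hx
      have hW : 0 < c + up θ (Z θ x) := hWSpos θ x hx0.le
      have hZx := hZs θ x hx0
      have hcomp := (hups.pd2_smooth.hasDerivAt_pd2 θ (Z θ x)).comp x hZx
      have h5 := hcomp.const_mul (2:ℝ)
      have hW' := ne_of_gt hW
      refine h5.congr_deriv ?_
      ring
  -- ### msl is constant, hfun is affine
  set m₀ := msl (-1) with hm₀def
  have hmslconst : ∀ s, s < 0 → msl s = m₀ := by
    intro s hs
    have hftc := intervalIntegral.integral_eq_sub_of_hasDerivAt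
      (f := msl) (f' := fun _ => (0:ℝ)) (a := -1) (b := s)
      (fun x hx => by
        have hx0 : x < 0 := by
          rcases Set.mem_uIcc.mp hx with h | h
          · linarith [h.2]
          · linarith [h.2]
        exact hmsl' x hx0)
      intervalIntegrable_const
    simp only [intervalIntegral.integral_const, smul_zero] at hftc
    linarith [hftc]
  have haff : ∀ s t, s < 0 → t < 0 → hfun t - hfun s = m₀ * (t - s) := by
    intro s t hs ht
    have hftc := intervalIntegral.integral_eq_sub_of_hasDerivAt
      (f := hfun) (f' := fun _ => m₀) (a := s) (b := t)
      (fun x hx => by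
        have hx0 : x < 0 := by
          rcases Set.mem_uIcc.mp hx with h | h
          · linarith [h.2]
          · linarith [h.2]
        have h2 := hh' x hx0
        rwa [hmslconst x hx0] at h2)
      intervalIntegrable_const
    rw [intervalIntegral.integral_const, smul_eq_mul] at hftc
    linarith [hftc]
  -- ### continuity of hfun at 0 from the left
  have hcont2 : ∀ s, s < 0 → Continuous (fun θ => (c + up θ (Z θ s))^2) :=
    fun s hs => ((continuous_const.add
      (hupc.comp (continuous_id.prodMk (hZcontθ s hs)))).pow 2)
  have hcont0 : Continuous (fun θ => (c + up θ 0)^2) :=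
    ((continuous_const.add
      (hupc.comp (continuous_id.prodMk continuous_const))).pow 2)
  have hfun0eq : hfun 0 = ∫ θ in (0:ℝ)..(2*π), (c + up θ 0)^2 := by
    apply intervalIntegral.integral_congr
    intro θ _
    simp only
    rw [hZ0 θ]
  obtain ⟨C4, hC4pos, hC4⟩ := bound_of_periodic2 (hups.pd2_smooth.cont) hupper.pd2 (-(1/m)) 0
  have huplip : ∀ θ Y, Y ∈ Icc (-(1/m)) (0:ℝ) → |up θ Y - up θ 0| ≤ C4 * |Y| := by
    intro θ Y hY
    have h := Convex.norm_image_sub_le_of_norm_hasDerivWithin_le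
      (f := fun Y => up θ Y) (f' := fun Y => pd2 up θ Y) (C := C4) (s := Icc (-(1/m)) 0)
      (fun x _ => (hups.hasDerivAt_pd2 θ x).hasDerivWithinAt)
      (fun x hx => by rw [Real.norm_eq_abs]; exact hC4 θ x hx)
      (convex_Icc _ _) (⟨neg_nonpos.mpr (by positivity), le_rfl⟩ : (0:ℝ) ∈ Icc (-(1/m)) 0) hY
    rw [Real.norm_eq_abs, Real.norm_eq_abs, sub_zero] at h
    exact h
  have hnear : ∀ s, -1 ≤ s → s < 0 →
      |hfun s - hfun 0| ≤ 2*π*(2*(c+M)*(C4*(|s|/m))) := by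
    intro s hs1 hs0
    have hZsm : ∀ θ, Z θ s ∈ Icc (-(1/m)) (0:ℝ) := by
      intro θ
      refine ⟨?_, hZle θ s hs0.le⟩
      calc -(1/m) = (-1)/m := by ring
      _ ≤ s/m := by gcongr
      _ ≤ Z θ s := hZlb θ s hs0.le
    have hdiff : hfun s - hfun 0
        = ∫ θ in (0:ℝ)..(2*π), ((c + up θ (Z θ s))^2 - (c + up θ 0)^2) := by
      rw [hfun0eq, ← intervalIntegral.integral_sub
        ((hcont2 s hs0).intervalIntegrable _ _) (hcont0.intervalIntegrable _ _)]
    rw [hdiff]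
    have hb : ∀ θ ∈ Ι (0:ℝ) (2*π),
        ‖(c + up θ (Z θ s))^2 - (c + up θ 0)^2‖ ≤ 2*(c+M)*(C4*(|s|/m)) := by
      intro θ _
      have hZθ0 : Z θ s ≤ 0 := hZle θ s hs0.le
      have ha1 : 0 < c + up θ (Z θ s) := hWSpos θ s hs0.le
      have ha2 : c + up θ (Z θ s) ≤ c + M := hWub θ _ hZθ0
      have hb1 : 0 < c + up θ 0 := hpos θ 0 le_rfl
      have hb2 : c + up θ 0 ≤ c + M := hWub θ 0 le_rfl
      have hab : |up θ (Z θ s) - up θ 0| ≤ C4 * (|s|/m) := by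
        calc |up θ (Z θ s) - up θ 0| ≤ C4 * |Z θ s| := huplip θ _ (hZsm θ)
        _ ≤ C4 * (|s|/m) := by
            apply mul_le_mul_of_nonneg_left _ hC4pos
            rw [abs_of_nonpos hZθ0, abs_of_nonpos hs0.le]
            have h9 := (div_le_iff₀ hm).mp (hZlb θ s hs0.le)
            rw [le_div_iff₀ hm]
            linarith
        _ = C4 * (|s|/m) := rfl
      have hfact : (c + up θ (Z θ s))^2 - (c + up θ 0)^2
          = (up θ (Z θ s) - up θ 0) * ((c + up θ (Z θ s)) + (c + up θ 0)) := by ring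
      rw [Real.norm_eq_abs, hfact, abs_mul]
      have hsum : |(c + up θ (Z θ s)) + (c + up θ 0)| ≤ 2*(c+M) := by
        rw [abs_of_pos (by linarith)]
        linarith
      calc |up θ (Z θ s) - up θ 0| * |(c + up θ (Z θ s)) + (c + up θ 0)|
          ≤ (C4 * (|s|/m)) * (2*(c+M)) := by
            apply mul_le_mul hab hsum (abs_nonneg _) (by positivity)
      _ = 2*(c+M)*(C4*(|s|/m)) := by ring
    calc |∫ θ in (0:ℝ)..(2*π), ((c + up θ (Z θ s))^2 - (c + up θ 0)^2)|
        ≤ 2*(c+M)*(C4*(|s|/m)) * |2*π - 0| :=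
          intervalIntegral.norm_integral_le_of_norm_le_const hb
    _ = 2*π*(2*(c+M)*(C4*(|s|/m))) := by
        rw [sub_zero, abs_of_pos Real.two_pi_pos]
        ring
  -- ### hfun is affine up to the boundary
  have hkey : ∀ s, s < 0 → hfun s = hfun 0 + m₀ * s := by
    intro s hs
    have habs : ∀ ε, 0 < ε → |hfun s - (hfun 0 + m₀ * s)| ≤ ε := by
      intro ε hε
      set D := 2*π*(2*(c+M)*(C4*(1/m))) + |m₀| + 1 with hDdef
      have hD : 0 < D := by positivity
      set r := min (min (ε/D) (-s/2)) 1 with hrdef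
      have hr : 0 < r := lt_min (lt_min (by positivity) (by linarith)) one_pos
      set t := -r with htdef
      have ht0 : t < 0 := by simp only [htdef]; linarith
      have hts : s < t := by
        have h1 : r ≤ -s/2 := le_trans (min_le_left _ _) (min_le_right _ _)
        simp only [htdef]
        linarith
      have ht1 : -1 ≤ t := by
        have h1 : r ≤ 1 := min_le_right _ _
        simp only [htdef]
        linarith
      have htε : |t| ≤ ε/D := by
        rw [htdef, abs_neg, abs_of_pos hr]
        exact le_trans (min_le_left _ _) (min_le_left _ _)
      have h2 := haff t s ht0 hs
      have h3 := hnear t ht1 ht0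
      have h4 : hfun s - (hfun 0 + m₀ * s) = (hfun t - hfun 0) + m₀ * (-t) := by
        linarith [h2]
      rw [h4]
      have h5 : 2*π*(2*(c+M)*(C4*(|t|/m))) = (2*π*(2*(c+M)*(C4*(1/m))))*|t| := by ring
      calc |(hfun t - hfun 0) + m₀ * (-t)| ≤ |hfun t - hfun 0| + |m₀ * (-t)| := abs_add_le _ _
      _ ≤ 2*π*(2*(c+M)*(C4*(|t|/m))) + |m₀| * |t| := by
          rw [abs_mul, abs_neg]
          exact add_le_add h3 le_rfl
      _ ≤ D * |t| := by
          rw [h5, hDdef]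
          nlinarith [abs_nonneg t, abs_nonneg m₀]
      _ ≤ D * (ε/D) := by
          apply mul_le_mul_of_nonneg_left htε hD.le
      _ = ε := by field_simp
    by_contra hne
    have h5 : 0 < |hfun s - (hfun 0 + m₀ * s)| := abs_pos.mpr (sub_ne_zero.mpr hne)
    have h6 := habs (|hfun s - (hfun 0 + m₀ * s)|/2) (by linarith)
    linarith
  -- ### far field limit
  have hfar : ∀ δ, 0 < δ → ∃ S, S < 0 ∧ ∀ s, s ≤ S →
      |hfun s - 2*π*c^2| ≤ 2*π*((2*c+M)*δ) := by
    intro δ hδ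
    obtain ⟨Y₂, hY₂⟩ := hlim δ hδ
    set Y₃ := min Y₂ (-1) with hY₃def
    have hY₃ : Y₃ < 0 := lt_of_le_of_lt (min_le_right _ _) (by norm_num)
    refine ⟨(c+M)*Y₃, by nlinarith, ?_⟩
    intro s hsS
    have hs0 : s < 0 := lt_of_le_of_lt hsS (by nlinarith)
    have hZY₂ : ∀ θ, Z θ s ≤ Y₂ := by
      intro θ
      calc Z θ s ≤ s/(c+M) := hZub θ s hs0.le
      _ ≤ ((c+M)*Y₃)/(c+M) := by gcongr
      _ = Y₃ := by field_simp
      _ ≤ Y₂ := min_le_left _ _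
    have hconst : (∫ _θ in (0:ℝ)..(2*π), (c:ℝ)^2) = 2*π*c^2 := by
      rw [intervalIntegral.integral_const, smul_eq_mul, sub_zero]
    have hdiff : hfun s - 2*π*c^2
        = ∫ θ in (0:ℝ)..(2*π), ((c + up θ (Z θ s))^2 - c^2) := by
      rw [← hconst, ← intervalIntegral.integral_sub
        ((hcont2 s hs0).intervalIntegrable _ _) (continuous_const.intervalIntegrable _ _)]
    rw [hdiff]
    have hb : ∀ θ ∈ Ι (0:ℝ) (2*π), ‖(c + up θ (Z θ s))^2 - c^2‖ ≤ (2*c+M)*δ := by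
      intro θ _
      have hu := (hY₂ θ (Z θ s) (hZY₂ θ)).1
      have huM := hbd θ (Z θ s) (hZle θ s hs0.le)
      rw [Real.norm_eq_abs]
      have hfact : (c + up θ (Z θ s))^2 - c^2
          = up θ (Z θ s) * (2*c + up θ (Z θ s)) := by ring
      rw [hfact, abs_mul]
      have h7 : |2*c + up θ (Z θ s)| ≤ 2*c + M := by
        have := abs_le.mp huM
        rw [abs_le]
        constructor <;> linarith [this.1, this.2]
      calc |up θ (Z θ s)| * |2*c + up θ (Z θ s)| ≤ δ * (2*c + M) := by
            apply mul_le_mul hu.le h7 (abs_nonneg _) hδ.le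
      _ = (2*c+M)*δ := by ring
    calc |∫ θ in (0:ℝ)..(2*π), ((c + up θ (Z θ s))^2 - c^2)|
        ≤ (2*c+M)*δ * |2*π - 0| := intervalIntegral.norm_integral_le_of_norm_le_const hb
    _ = 2*π*((2*c+M)*δ) := by
        rw [sub_zero, abs_of_pos Real.two_pi_pos]
        ring
  have h2cM : (0:ℝ) < 2*c + M := by linarith
  -- ### m₀ = 0
  have hm₀0 : m₀ = 0 := by
    by_contra hne
    have habs : 0 < |m₀| := abs_pos.mpr hne
    set δ := |m₀| / (8*π*(2*c+M) + 1) with hδdef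
    have hden : (0:ℝ) < 8*π*(2*c+M) + 1 := by positivity
    have hδ : 0 < δ := by positivity
    obtain ⟨S, hS, hSp⟩ := hfar δ hδ
    have h1 := hSp S le_rfl
    have h2 := hSp (S-1) (by linarith)
    have h3 := haff (S-1) S (by linarith) hS
    have h4 : |m₀| ≤ 4*π*((2*c+M)*δ) := by
      have h3' : hfun S - hfun (S-1) = m₀ := by
        rw [h3]; ring
      calc |m₀| = |hfun S - hfun (S-1)| := by rw [h3']
      _ ≤ |hfun S - 2*π*c^2| + |2*π*c^2 - hfun (S-1)| := abs_sub_le _ _ _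
      _ = |hfun S - 2*π*c^2| + |hfun (S-1) - 2*π*c^2| := by rw [abs_sub_comm (2*π*c^2)]
      _ ≤ 2*π*((2*c+M)*δ) + 2*π*((2*c+M)*δ) := add_le_add h1 h2
      _ = 4*π*((2*c+M)*δ) := by ring
    have h5 : 4*π*((2*c+M)*δ) = (4*π*(2*c+M)/(8*π*(2*c+M)+1))*|m₀| := by
      rw [hδdef]; ring
    have hfrac : 4*π*(2*c+M)/(8*π*(2*c+M)+1) < 1 := by
      rw [div_lt_one hden]
      nlinarith [Real.pi_pos]
    rw [h5] at h4
    nlinarith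
  -- ### hfun 0 = 2 π c²
  have hfun0 : hfun 0 = 2*π*c^2 := by
    by_contra hne
    have habs : 0 < |hfun 0 - 2*π*c^2| := abs_pos.mpr (sub_ne_zero.mpr hne)
    set δ := |hfun 0 - 2*π*c^2| / (4*π*(2*c+M) + 1) with hδdef
    have hden : (0:ℝ) < 4*π*(2*c+M) + 1 := by positivity
    have hδ : 0 < δ := by positivity
    obtain ⟨S, hS, hSp⟩ := hfar δ hδ
    have h1 := hSp S le_rfl
    have h2 := hkey S hS
    rw [hm₀0, zero_mul, add_zero] at h2
    rw [h2] at h1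
    have h5 : 2*π*((2*c+M)*δ) = (2*π*(2*c+M)/(4*π*(2*c+M)+1))*|hfun 0 - 2*π*c^2| := by
      rw [hδdef]; ring
    have hfrac : 2*π*(2*c+M)/(4*π*(2*c+M)+1) < 1 := by
      rw [div_lt_one hden]
      nlinarith [Real.pi_pos]
    rw [h5] at h1
    nlinarith
  -- ### final computation
  have hfc : Continuous f := hfs.continuous
  have hval : hfun 0 = 2*π*α^2 + η^2 * ∫ θ in (0:ℝ)..(2*π), (f θ)^2 := by
    have h1 : hfun 0 = ∫ θ in (0:ℝ)..(2*π), (α^2 + (2*α*η) * f θ + η^2 * (f θ)^2) := by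
      rw [hfun0eq]
      apply intervalIntegral.integral_congr
      intro θ _
      simp only
      rw [hbc θ]
      ring
    rw [h1]
    rw [intervalIntegral.integral_add (by
        apply IntervalIntegrable.add
        · exact intervalIntegrable_const
        · exact (continuous_const.mul hfc).intervalIntegrable _ _)
      (show IntervalIntegrable (fun θ => η^2 * (f θ)^2) volume 0 (2*π) from
        (continuous_const.mul (hfc.pow 2)).intervalIntegrable _ _)]
    rw [intervalIntegral.integral_add intervalIntegrable_const
      (show IntervalIntegrable (fun θ => 2*α*η * f θ) volume 0 (2*π) from
        (continuous_const.mul hfc).intervalIntegrable _ _)]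
    rw [intervalIntegral.integral_const, intervalIntegral.integral_const_mul,
      intervalIntegral.integral_const_mul, hfmean, smul_eq_mul, sub_zero]
    ring
  rw [hval] at hfun0
  have h2π : (0:ℝ) < 2*π := Real.two_pi_pos
  have h2π' : (2*π : ℝ) ≠ 0 := ne_of_gt h2π
  field_simp
  nlinarith [hfun0]


end
end

section
/- Let a ∈ ℝ and let u : ℝ² → ℝ² be a vector field that is continuous on the closed unit disk {(x,y) : x² + y² ≤ 1} and continuously differentiable on the open unit disk, such that: u is divergence-free (∂_x u₁ + ∂_y u₂ = 0 on the open disk), u has constant vorticity a (∂_x u₂ − ∂_y u₁ = a on the open disk), and u is tangent to the boundary (u(x,y)·(x,y) = 0 whenever x² + y² = 1). Then u(x,y) = (a/2)(−y, x) for all (x,y) in the closed unit disk; i.e., u is the rigid rotation of angular velocity a/2. -/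
open Complex Metric Topology Filter

-- ext lemma for ℝ-linear maps ℂ → ℂ
lemma clm_ext_ri {T S : ℂ →L[ℝ] ℂ} (h1 : T 1 = S 1) (hI : T Complex.I = S Complex.I) :
    T = S := by
  ext z
  have hz : z = z.re • (1 : ℂ) + z.im • Complex.I := by
    simpa [Complex.real_smul] using (Complex.re_add_im z).symm
  rw [hz, map_add, map_add, map_smul, map_smul, map_smul, map_smul, h1, hI]

/-- The only steady incompressible flow on the closed unit disk with constant vorticity `a`
and no flow through the boundary is the rigid rotation `u(x,y) = (a/2)(-y, x)`. -/
theorem constant_vorticity_rigid_rotation (a : ℝ) (u : ℝ × ℝ → ℝ × ℝ)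
    (hc : ContinuousOn u {p : ℝ × ℝ | p.1 ^ 2 + p.2 ^ 2 ≤ 1})
    (hd : ContDiffOn ℝ 1 u {p : ℝ × ℝ | p.1 ^ 2 + p.2 ^ 2 < 1})
    (hdiv : ∀ p ∈ {p : ℝ × ℝ | p.1 ^ 2 + p.2 ^ 2 < 1},
      (fderiv ℝ u p (1, 0)).1 + (fderiv ℝ u p (0, 1)).2 = 0)
    (hvort : ∀ p ∈ {p : ℝ × ℝ | p.1 ^ 2 + p.2 ^ 2 < 1},
      (fderiv ℝ u p (1, 0)).2 - (fderiv ℝ u p (0, 1)).1 = a)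
    (htan : ∀ p : ℝ × ℝ, p.1 ^ 2 + p.2 ^ 2 = 1 →
      (u p).1 * p.1 + (u p).2 * p.2 = 0) :
    ∀ p ∈ {p : ℝ × ℝ | p.1 ^ 2 + p.2 ^ 2 ≤ 1},
      u p = (a / 2 * (-p.2), a / 2 * p.1) := by
  set Ω : Set (ℝ × ℝ) := {p : ℝ × ℝ | p.1 ^ 2 + p.2 ^ 2 < 1} with hΩdef
  have hΩopen : IsOpen Ω := isOpen_lt (by fun_prop) continuous_const
  set f : ℂ → ℂ := fun z =>
    (((u (z.re, z.im)).1 + a / 2 * z.im : ℝ) : ℂ) +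
      (((a / 2 * z.re - (u (z.re, z.im)).2 : ℝ) : ℂ)) * Complex.I with hfdef
  -- membership transfer
  have hmem : ∀ z : ℂ, z ∈ ball (0:ℂ) 1 → ((z.re, z.im) : ℝ × ℝ) ∈ Ω := by
    intro z hz
    simp only [mem_ball_zero_iff] at hz
    have : z.re ^ 2 + z.im ^ 2 = ‖z‖ ^ 2 := by
      rw [Complex.sq_norm, Complex.normSq_apply]; ring
    simp only [hΩdef, Set.mem_setOf_eq, this]
    nlinarith [norm_nonneg z]
  -- complex differentiability of f on the ball
  have hfd : ∀ z ∈ ball (0:ℂ) 1, DifferentiableAt ℂ f z := by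
    intro z hz
    set q : ℝ × ℝ := (z.re, z.im) with hq
    have hqΩ : q ∈ Ω := hmem z hz
    have hud : DifferentiableAt ℝ u q :=
      ((hd.differentiableOn one_ne_zero) q hqΩ).differentiableAt (hΩopen.mem_nhds hqΩ)
    set D := fderiv ℝ u q with hD
    set φ : ℂ →L[ℝ] ℝ × ℝ := Complex.equivRealProdCLM.toContinuousLinearMap with hφdef
    have hφ : HasFDerivAt (fun z : ℂ => ((z.re, z.im) : ℝ × ℝ)) φ z :=
      Complex.equivRealProdCLM.hasFDerivAt
    have huφ : HasFDerivAt (fun z : ℂ => u (z.re, z.im)) (D.comp φ) z :=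
      hud.hasFDerivAt.comp z hφ
    have hA : HasFDerivAt (fun z : ℂ => (u (z.re, z.im)).1 + a / 2 * z.im)
        ((ContinuousLinearMap.fst ℝ ℝ ℝ).comp (D.comp φ) + (a / 2) • Complex.imCLM) z :=
      huφ.fst.add (Complex.imCLM.hasFDerivAt.const_mul (a / 2))
    have hB : HasFDerivAt (fun z : ℂ => a / 2 * z.re - (u (z.re, z.im)).2)
        ((a / 2) • Complex.reCLM - (ContinuousLinearMap.snd ℝ ℝ ℝ).comp (D.comp φ)) z :=
      (Complex.reCLM.hasFDerivAt.const_mul (a / 2)).sub huφ.snd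
    set L : ℂ →L[ℝ] ℂ :=
      Complex.ofRealCLM.comp
          ((ContinuousLinearMap.fst ℝ ℝ ℝ).comp (D.comp φ) + (a / 2) • Complex.imCLM) +
        (Complex.ofRealCLM.comp
          ((a / 2) • Complex.reCLM -
            (ContinuousLinearMap.snd ℝ ℝ ℝ).comp (D.comp φ))).smulRight Complex.I with hLdef
    have hL : HasFDerivAt f L z :=
      (Complex.ofRealCLM.hasFDerivAt.comp z hA).add
        ((Complex.ofRealCLM.hasFDerivAt.comp z hB).mul_const' Complex.I)
    have hL1 : L 1 = ((D (1, 0)).1 : ℂ) + ((a / 2 - (D (1, 0)).2 : ℝ) : ℂ) * Complex.I := by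
      simp [hLdef, hφdef, Complex.ofReal_sub]
    have hLI : L Complex.I = (((D (0, 1)).1 + a / 2 : ℝ) : ℂ) +
        ((-(D (0, 1)).2 : ℝ) : ℂ) * Complex.I := by
      simp [hLdef, hφdef, Complex.ofReal_sub]
    have hCR : L Complex.I = Complex.I * L 1 := by
      rw [hL1, hLI]
      have h1 := hdiv q hqΩ
      have h2 := hvort q hqΩ
      rw [← hD] at h1 h2
      apply Complex.ext <;> simp <;> linarith
    have hrest : ContinuousLinearMap.restrictScalars ℝ (L 1 • (1 : ℂ →L[ℂ] ℂ)) = L := by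
      apply clm_ext_ri <;>
        simp [ContinuousLinearMap.coe_restrictScalars', hCR, mul_comm]
    exact (hasFDerivAt_of_restrictScalars ℝ hL hrest).differentiableAt
  -- continuity of f on the closed ball
  have hψ : Continuous fun z : ℂ => ((z.re, z.im) : ℝ × ℝ) :=
    Complex.continuous_re.prodMk Complex.continuous_im
  have hmaps : Set.MapsTo (fun z : ℂ => ((z.re, z.im) : ℝ × ℝ)) (closedBall (0:ℂ) 1)
      {p : ℝ × ℝ | p.1 ^ 2 + p.2 ^ 2 ≤ 1} := by
    intro z hz
    simp only [mem_closedBall_zero_iff] at hz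
    have h2 : z.re ^ 2 + z.im ^ 2 = ‖z‖ ^ 2 := by
      rw [Complex.sq_norm, Complex.normSq_apply]; ring
    simp only [Set.mem_setOf_eq, h2]
    nlinarith [norm_nonneg z]
  have huc : ContinuousOn (fun z : ℂ => u (z.re, z.im)) (closedBall (0:ℂ) 1) :=
    hc.comp hψ.continuousOn hmaps
  have hfc : ContinuousOn f (closedBall (0:ℂ) 1) := by
    have h1 : ContinuousOn (fun z : ℂ => (u (z.re, z.im)).1 + a / 2 * z.im)
        (closedBall (0:ℂ) 1) :=
      (continuous_fst.comp_continuousOn huc).add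
        ((continuous_const.mul Complex.continuous_im).continuousOn)
    have h2 : ContinuousOn (fun z : ℂ => a / 2 * z.re - (u (z.re, z.im)).2)
        (closedBall (0:ℂ) 1) :=
      ((continuous_const.mul Complex.continuous_re).continuousOn).sub
        (continuous_snd.comp_continuousOn huc)
    exact (Complex.continuous_ofReal.comp_continuousOn h1).add
      ((Complex.continuous_ofReal.comp_continuousOn h2).mul continuousOn_const)
  set g : ℂ → ℂ := fun z => z * f z with hgdef
  have hgd : DifferentiableOn ℂ g (ball (0:ℂ) 1) := fun z hz =>
    (differentiableAt_id.mul (hfd z hz)).differentiableWithinAt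
  have hgc : ContinuousOn g (closedBall (0:ℂ) 1) := continuousOn_id.mul hfc
  have hcl : closure (ball (0:ℂ) 1) = closedBall (0:ℂ) 1 := closure_ball 0 one_ne_zero
  have hfr : frontier (ball (0:ℂ) 1) = sphere (0:ℂ) 1 := frontier_ball 0 one_ne_zero
  -- boundary condition
  have hbd : ∀ z ∈ sphere (0:ℂ) 1, (g z).re = 0 := by
    intro z hz
    simp only [mem_sphere_zero_iff_norm] at hz
    have h2 : z.re ^ 2 + z.im ^ 2 = 1 := by
      have : z.re ^ 2 + z.im ^ 2 = ‖z‖ ^ 2 := by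
        rw [Complex.sq_norm, Complex.normSq_apply]; ring
      rw [this, hz]; norm_num
    have ht := htan (z.re, z.im) h2
    simp only [hgdef, hfdef, Complex.mul_re, Complex.add_re, Complex.add_im,
      Complex.ofReal_re, Complex.ofReal_im, Complex.mul_im, Complex.I_re, Complex.I_im]
    ring_nf
    ring_nf at ht
    linarith
  -- Re g = 0 on the closed ball, via maximum modulus on exp(±g)
  have hre0 : ∀ z ∈ closedBall (0:ℂ) 1, (g z).re = 0 := by
    have hside : ∀ (s : ℝ), s = 1 ∨ s = -1 →
        ∀ z ∈ closedBall (0:ℂ) 1, (s • g z).re ≤ 0 := by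
      intro s hs z hz
      have hdc : DiffContOnCl ℂ (fun w => Complex.exp (s • g w)) (ball (0:ℂ) 1) :=
        ⟨(hgd.const_smul s).cexp, Complex.continuous_exp.comp_continuousOn
          (by rw [hcl]; exact hgc.const_smul s)⟩
      have hnorm := Complex.norm_le_of_forall_mem_frontier_norm_le isBounded_ball hdc
        (C := 1) ?_ (z := z) (by rw [hcl]; exact hz)
      · rw [Complex.norm_exp] at hnorm
        have := Real.exp_le_one_iff.1 hnorm
        exact this
      · intro w hw
        rw [hfr] at hw
        rw [Complex.norm_exp]
        have : (s • g w).re = 0 := by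
          rw [Complex.real_smul, Complex.mul_re]
          simp [hbd w hw]
        rw [this, Real.exp_zero]
    intro z hz
    have h1 := hside 1 (Or.inl rfl) z hz
    have h2 := hside (-1) (Or.inr rfl) z hz
    simp only [one_smul, neg_smul, Complex.neg_re] at h1 h2
    linarith
  -- g is constant (= 0) on the ball, by the open mapping theorem
  have hg0 : ∀ z ∈ ball (0:ℂ) 1, g z = 0 := by
    have han : AnalyticOnNhd ℂ g (ball (0:ℂ) 1) := hgd.analyticOnNhd isOpen_ball
    rcases han.is_constant_or_isOpen (convex_ball 0 1).isPreconnected with ⟨w, hw⟩ | hopen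
    · intro z hz
      have h0 : g 0 = 0 := by simp [hgdef]
      rw [hw z hz, ← hw 0 (mem_ball_self one_pos), h0]
    · exfalso
      have himg : IsOpen (g '' ball (0:ℂ) 1) := hopen _ subset_rfl isOpen_ball
      have h0 : (0:ℂ) ∈ g '' ball (0:ℂ) 1 :=
        ⟨0, mem_ball_self one_pos, by simp [hgdef]⟩
      rcases Metric.isOpen_iff.1 himg 0 h0 with ⟨ε, hε, hsub⟩
      have hmem2 : ((ε/2 : ℝ) : ℂ) ∈ ball (0:ℂ) ε := by
        rw [mem_ball_zero_iff, Complex.norm_real, Real.norm_eq_abs, abs_of_pos (by linarith)]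
        linarith
      rcases hsub hmem2 with ⟨z, hzball, hgz⟩
      have hzr : (g z).re = 0 := hre0 z (ball_subset_closedBall hzball)
      rw [hgz] at hzr
      simp only [Complex.ofReal_re] at hzr
      linarith
  -- f = 0 on the ball
  have hf0 : ∀ z ∈ ball (0:ℂ) 1, f z = 0 := by
    have haux : ∀ z ∈ ball (0:ℂ) 1, z ≠ 0 → f z = 0 := by
      intro z hz hne
      have h := hg0 z hz
      simp only [hgdef] at h
      rcases mul_eq_zero.1 h with h' | h'
      exacts [absurd h' hne, h']
    intro z hz
    rcases eq_or_ne z 0 with rfl | hne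
    · have hct : ContinuousAt f 0 := (hfd 0 (mem_ball_self one_pos)).continuousAt
      have hball : ball (0:ℂ) 1 ∈ 𝓝 (0:ℂ) := isOpen_ball.mem_nhds (mem_ball_self one_pos)
      have hev : f =ᶠ[𝓝[≠] (0:ℂ)] (fun _ => 0) := by
        filter_upwards [self_mem_nhdsWithin, mem_nhdsWithin_of_mem_nhds hball] with w hw hwb
        exact haux w hwb hw
      have h1 : Filter.Tendsto f (𝓝[≠] (0:ℂ)) (𝓝 (f 0)) :=
        hct.continuousWithinAt.tendsto
      have h2 : Filter.Tendsto f (𝓝[≠] (0:ℂ)) (𝓝 0) :=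
        (Filter.tendsto_congr' hev).2 tendsto_const_nhds
      exact tendsto_nhds_unique h1 h2
    · exact haux z hz hne
  -- conclusion on the open disk
  have hint : ∀ p ∈ Ω, u p = (a / 2 * (-p.2), a / 2 * p.1) := by
    rintro ⟨x, y⟩ hp
    simp only [hΩdef, Set.mem_setOf_eq] at hp
    set z : ℂ := ⟨x, y⟩ with hzdef
    have hzre : z.re = x := rfl
    have hzim : z.im = y := rfl
    have hzb : z ∈ ball (0:ℂ) 1 := by
      rw [mem_ball_zero_iff]
      have h2 : ‖z‖ ^ 2 = x ^ 2 + y ^ 2 := by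
        rw [Complex.sq_norm, Complex.normSq_apply, hzre, hzim]; ring
      nlinarith [norm_nonneg z]
    have h := hf0 z hzb
    simp only [hfdef, hzre, hzim] at h
    have hre := congrArg Complex.re h
    have him := congrArg Complex.im h
    simp only [Complex.add_re, Complex.add_im, Complex.ofReal_re, Complex.ofReal_im,
      Complex.mul_re, Complex.mul_im, Complex.I_re, Complex.I_im, Complex.zero_re,
      Complex.zero_im] at hre him
    refine Prod.ext ?_ ?_ <;> simp <;> linarith
  -- extend to the closed disk by continuity
  rintro ⟨x, y⟩ hp
  simp only [Set.mem_setOf_eq] at hp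
  set t : ℕ → ℝ := fun n => 1 - 1 / (n + 1) with htdef
  have ht0 : ∀ n, 0 ≤ t n := by
    intro n
    have h1 : 1 / ((n : ℝ) + 1) ≤ 1 := by
      rw [div_le_one (by positivity)]
      linarith [Nat.cast_nonneg (α := ℝ) n]
    simp only [htdef]
    linarith
  have ht1 : ∀ n, t n < 1 := by
    intro n
    have h1 : 0 < 1 / ((n : ℝ) + 1) := by positivity
    simp only [htdef]
    linarith
  have htlim : Filter.Tendsto t Filter.atTop (𝓝 1) := by
    have h0 := tendsto_one_div_add_atTop_nhds_zero_nat (𝕜 := ℝ)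
    have := (tendsto_const_nhds (x := (1:ℝ)) (f := Filter.atTop (α := ℕ))).sub h0
    simpa [htdef] using this
  set q : ℕ → ℝ × ℝ := fun n => (t n * x, t n * y) with hqdef
  have hqΩ : ∀ n, q n ∈ Ω := by
    intro n
    simp only [hΩdef, hqdef, Set.mem_setOf_eq]
    have h0 := ht0 n
    have h1 := ht1 n
    have h2 : t n * t n < 1 := by nlinarith
    have h3 : (t n * x) ^ 2 + (t n * y) ^ 2 = t n * t n * (x ^ 2 + y ^ 2) := by ring
    have h4 : t n * t n * (x ^ 2 + y ^ 2) ≤ t n * t n * 1 :=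
      mul_le_mul_of_nonneg_left hp (mul_nonneg h0 h0)
    linarith
  have hqlim : Filter.Tendsto q Filter.atTop (𝓝 (x, y)) := by
    have h1 := htlim.mul_const x
    have h2 := htlim.mul_const y
    rw [one_mul] at h1 h2
    exact h1.prodMk_nhds h2
  have hq_closed : ∀ n, q n ∈ {p : ℝ × ℝ | p.1 ^ 2 + p.2 ^ 2 ≤ 1} := by
    intro n
    have h := hqΩ n
    simp only [hΩdef, Set.mem_setOf_eq] at h ⊢
    linarith
  have hlim1 : Filter.Tendsto (fun n => u (q n)) Filter.atTop (𝓝 (u (x, y))) :=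
    ((hc (x, y) hp).tendsto).comp
      (tendsto_nhdsWithin_of_tendsto_nhds_of_eventually_within q hqlim
        (Filter.Eventually.of_forall hq_closed))
  have hlim2 : Filter.Tendsto (fun n => u (q n)) Filter.atTop
      (𝓝 (a / 2 * (-y), a / 2 * x)) := by
    have heq : (fun n => u (q n)) = fun n => (a / 2 * (-(t n * y)), a / 2 * (t n * x)) := by
      funext n
      exact hint (q n) (hqΩ n)
    rw [heq]
    have h1 : Filter.Tendsto (fun n => a / 2 * (-(t n * y))) Filter.atTop
        (𝓝 (a / 2 * (-y))) := by
      have h := ((htlim.mul_const y).neg.const_mul (a / 2))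
      rw [one_mul] at h
      exact h
    have h2 : Filter.Tendsto (fun n => a / 2 * (t n * x)) Filter.atTop
        (𝓝 (a / 2 * x)) := by
      have h := ((htlim.mul_const x).const_mul (a / 2))
      rw [one_mul] at h
      exact h
    exact h1.prodMk_nhds h2
  exact tendsto_nhds_unique hlim1 hlim2
end
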